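/- Let M be an injective left R-module. M is Σ-injective if and only if every finitely injective submodule of E(M^(ℵ₀)) is injective. -/

import Mathlib

open DirectSum

universe u v

/-! ### Auxiliary lemmas -/

section Aux
variable {R : Type u} [Ring R]

private lemma inj_of_equiv {A B : Type v} [AddCommGroup A] [Module R A]
    [AddCommGroup B] [Module R B] (e : A ≃ₗ[R] B) (h : Module.Injective R A) :
    Module.Injective R B where
  out X Y _ _ _ _ i hi f := by
    obtain ⟨g, hg⟩ := h.out i hi (e.symm.toLinearMap ∘ₗ f)
    exact ⟨e.toLinearMap ∘ₗ g, fun x => by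
      have := hg x
      simp only [LinearMap.coe_comp, Function.comp_apply, LinearEquiv.coe_coe] at this ⊢
      rw [this, LinearEquiv.apply_symm_apply]⟩

private lemma inj_pi {ι : Type v} {W : ι → Type v}
    [∀ i, AddCommGroup (W i)] [∀ i, Module R (W i)] (h : ∀ i, Module.Injective R (W i)) :
    Module.Injective R (∀ i, W i) where
  out X Y _ _ _ _ i hi f := by
    choose g hg using fun k => (h k).out i hi ((LinearMap.proj k).comp f)
    refine ⟨LinearMap.pi g, fun x => funext fun k => ?_⟩
    simpa using hg k x

/-- key extension tool: for any sequence `cc` in `W`, there is a finitely supported `w` such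
that whenever `a • cc` is finitely supported, `a • cc = a • w`. -/
private lemma key_ext {W : Type v} [AddCommGroup W] [Module R W]
    (hinj : Module.Injective R (ℕ →₀ W)) (cc : ℕ → W) :
    ∃ w : ℕ →₀ W, ∀ a : R, (Function.support (a • cc)).Finite →
      ∀ n : ℕ, a • cc n = a • w n := by
  classical
  set Φ : Submodule R (ℕ → W) :=
    { carrier := {f | (Function.support f).Finite}
      add_mem' := fun hf hg => Set.Finite.subset (hf.union hg) (Function.support_add _ _)
      zero_mem' := by simp [Function.support_zero]
      smul_mem' := fun r f hf => Set.Finite.subset hf fun n hn => by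
        simp only [Function.mem_support] at hn ⊢
        exact fun h0 => hn (by simp [Pi.smul_apply, h0]) }
    with hΦdef
  set V : Submodule R (ℕ → W) := Submodule.span R {cc} with hVdef
  have hccV : cc ∈ V := Submodule.mem_span_singleton_self cc
  set U : Submodule R (ℕ → W) := V ⊓ Φ with hUdef
  have hUleV : U ≤ V := inf_le_left
  set θ : U →ₗ[R] (ℕ →₀ W) :=
    { toFun := fun u => Finsupp.ofSupportFinite u.1 u.2.2
      map_add' := fun u v => Finsupp.ext fun n => rfl
      map_smul' := fun r u => Finsupp.ext fun n => rfl } with hθdef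
  obtain ⟨ψ, hψ⟩ := hinj.out (Submodule.inclusion hUleV)
    (Submodule.inclusion_injective hUleV) θ
  refine ⟨ψ ⟨cc, hccV⟩, fun a hfin n => ?_⟩
  have hU : a • cc ∈ U := ⟨Submodule.smul_mem V a hccV, hfin⟩
  have h1 : ψ ⟨a • cc, Submodule.smul_mem V a hccV⟩ = θ ⟨a • cc, hU⟩ := by
    have := hψ ⟨a • cc, hU⟩
    convert this using 2
    rfl
  have h2 : ψ ⟨a • cc, Submodule.smul_mem V a hccV⟩ = a • ψ ⟨cc, hccV⟩ := by
    rw [show (⟨a • cc, Submodule.smul_mem V a hccV⟩ : V) = a • (⟨cc, hccV⟩ : V) from rfl,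
      map_smul]
  have := congrArg (fun t => t n) (h1.symm.trans h2)
  exact this

end Aux

section Aux2
variable {R : Type u} [Ring R]


private lemma no_torsion_chain {W : Type v} [AddCommGroup W] [Module R W]
    (hinj : Module.Injective R (ℕ →₀ W)) (e : ℕ → W)
    (hchain : ∀ n, Ideal.torsionOf R W (e n) < Ideal.torsionOf R W (e (n + 1))) : False := by
  classical
  have mono : ∀ m k, m ≤ k → Ideal.torsionOf R W (e m) ≤ Ideal.torsionOf R W (e k) := by
    intro m k h
    induction k, h using Nat.le_induction with
    | base => exact le_rfl
    | succ k hk ih => exact ih.trans (hchain k).le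
  obtain ⟨w, hw⟩ := key_ext hinj e
  obtain ⟨n, hn⟩ : ∃ n : ℕ, n ∉ w.support := Finset.exists_notMem w.support
  have hwn : w n = 0 := Finsupp.notMem_support_iff.mp hn
  have key : Ideal.torsionOf R W (e (n + 1)) ≤ Ideal.torsionOf R W (e n) := by
    intro a ha
    rw [Ideal.mem_torsionOf_iff] at ha ⊢
    have hfin : (Function.support (a • e)).Finite := by
      refine Set.Finite.subset (Set.finite_Iio (n + 2)) fun m hm => ?_
      simp only [Function.mem_support, Pi.smul_apply] at hm
      by_contra hc
      simp only [Set.mem_Iio, not_lt] at hc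
      exact hm (by
        have := mono (n + 1) m (by omega) (by rwa [Ideal.mem_torsionOf_iff])
        rwa [Ideal.mem_torsionOf_iff] at this)
    have := hw a hfin n
    rw [show a • e n = a • w n from this, hwn, smul_zero]
  exact absurd ((hchain n).trans_le key) (lt_irrefl _)

private lemma exists_max_torsion {W : Type v} [AddCommGroup W] [Module R W]
    (hinj : Module.Injective R (ℕ →₀ W)) (T : Set W) (hT : T.Nonempty) :
    ∃ e ∈ T, ∀ e' ∈ T, ¬ Ideal.torsionOf R W e < Ideal.torsionOf R W e' := by
  by_contra h
  push_neg at h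
  obtain ⟨e0, he0⟩ := hT
  choose next hmem hlt using h
  let seq : ℕ → {x // x ∈ T} := fun n =>
    Nat.rec ⟨e0, he0⟩ (fun _ p => ⟨next p.1 p.2, hmem p.1 p.2⟩) n
  exact no_torsion_chain hinj (fun n => (seq n).1) (fun n => hlt _ (seq n).2)

end Aux2

noncomputable section Aux3
open Module Module.Baer

variable {R : Type u} [Ring R] {Q : Type v} [AddCommGroup Q] [Module R Q]
variable {X Y : Type v} [AddCommGroup X] [AddCommGroup Y] [Module R X] [Module R Y]
variable (i : X →ₗ[R] Y) (f : X →ₗ[R] Q) [Fact <| Function.Injective i]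
variable (φ : Y → (R →ₗ[R] Q))

section withphi
variable (hφ : ∀ (y : Y) (r : R) (hr : r ∈ ExtensionOfMaxAdjoin.ideal i f y),
    φ y r = ExtensionOfMaxAdjoin.idealTo i f y ⟨r, hr⟩)
include hφ in
private theorem my_wd' {y : Y} (r : R) (eq1 : r • y = 0) : φ y r = 0 := by
  have hr : r ∈ ExtensionOfMaxAdjoin.ideal i f y := by
    change (r • y) ∈ (extensionOfMax i f).toLinearPMap.domain
    rw [eq1]
    apply Submodule.zero_mem _
  rw [hφ y r hr]
  dsimp [ExtensionOfMaxAdjoin.idealTo]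
  simp only [LinearMap.coe_mk, eq1, Subtype.coe_mk, ← ZeroMemClass.zero_def,
    (extensionOfMax i f).toLinearPMap.map_zero]

include hφ in
private theorem my_eq {y : Y} (r : R)
    (hr : r • y ∈ (extensionOfMax i f).domain) :
    φ y r = (extensionOfMax i f).toLinearPMap ⟨r • y, hr⟩ := by
  simp only [hφ y r hr, ExtensionOfMaxAdjoin.idealTo, LinearMap.coe_mk, Subtype.coe_mk,
    AddHom.coe_mk]

/-- extension to `dom ⊔ ⟨y⟩` -/
private def myExtensionToFun {y : Y} :
    supExtensionOfMaxSingleton i f y → Q := fun x =>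
  (extensionOfMax i f).toLinearPMap (ExtensionOfMaxAdjoin.fst i x) +
    φ y (ExtensionOfMaxAdjoin.snd i x)

include hφ in
private theorem myExtensionToFun_wd {y : Y}
    (x : supExtensionOfMaxSingleton i f y) (a : (extensionOfMax i f).domain)
    (r : R) (eq1 : ↑x = ↑a + r • y) :
    myExtensionToFun i f φ x =
      (extensionOfMax i f).toLinearPMap a + φ y r := by
  cases' a with a ha
  have eq2 :
    (ExtensionOfMaxAdjoin.fst i x - a : Y) = (r - ExtensionOfMaxAdjoin.snd i x) • y := by
    change x = a + r • y at eq1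
    rwa [ExtensionOfMaxAdjoin.eqn, ← sub_eq_zero, ← sub_sub_sub_eq, sub_eq_zero, ← sub_smul]
      at eq1
  have eq3 := my_eq i f φ hφ (r - ExtensionOfMaxAdjoin.snd i x)
      (by rw [← eq2]; exact Submodule.sub_mem _ (ExtensionOfMaxAdjoin.fst i x).2 ha)
  simp only [map_sub, sub_smul, sub_eq_iff_eq_add] at eq3
  unfold myExtensionToFun
  rw [eq3, ← add_assoc, ← (extensionOfMax i f).toLinearPMap.map_add, AddMemClass.mk_add_mk]
  congr
  ext
  dsimp
  rw [Subtype.coe_mk, add_sub, ← eq1]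
  exact eq_sub_of_add_eq (ExtensionOfMaxAdjoin.eqn i x).symm

/-- The linear map `dom ⊔ ⟨y⟩ ⟶ Q` extending the max extension -/
private def myExtensionOfMaxAdjoin (y : Y) : ExtensionOf i f where
  domain := supExtensionOfMaxSingleton i f y
  le := le_trans (extensionOfMax i f).le le_sup_left
  toFun :=
    { toFun := myExtensionToFun i f φ
      map_add' := fun a b => by
        have eq1 :
          ↑a + ↑b =
            ↑(ExtensionOfMaxAdjoin.fst i a + ExtensionOfMaxAdjoin.fst i b) +
              (ExtensionOfMaxAdjoin.snd i a + ExtensionOfMaxAdjoin.snd i b) • y := by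
          rw [ExtensionOfMaxAdjoin.eqn, ExtensionOfMaxAdjoin.eqn, add_smul, Submodule.coe_add]
          ac_rfl
        rw [myExtensionToFun_wd (y := y) i f φ hφ (a + b) _ _ eq1, LinearPMap.map_add, map_add]
        unfold myExtensionToFun
        abel
      map_smul' := fun r a => by
        dsimp
        have eq1 :
          r • (a : Y) =
            ↑(r • ExtensionOfMaxAdjoin.fst i a) + (r • ExtensionOfMaxAdjoin.snd i a) • y := by
          rw [ExtensionOfMaxAdjoin.eqn, smul_add, smul_eq_mul, mul_smul]
          rfl
        rw [myExtensionToFun_wd (y := y) i f φ hφ (r • a :) _ _ eq1, LinearMap.map_smul,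
          LinearPMap.map_smul, ← smul_add]
        congr }
  is_extension m := by
    dsimp
    rw [(extensionOfMax i f).is_extension,
      myExtensionToFun_wd (y := y) i f φ hφ _ ⟨i m, _⟩ 0 _, map_zero, add_zero]
    simp

include hφ in
private theorem myExtensionOfMax_le {y : Y} :
    extensionOfMax i f ≤ myExtensionOfMaxAdjoin i f φ hφ y :=
  ⟨le_sup_left, fun x x' EQ => by
    symm
    change myExtensionToFun i f φ _ = _
    rw [myExtensionToFun_wd i f φ hφ x' x 0 (by simp [EQ]), map_zero, add_zero]⟩

end withphi

private theorem my_eq_top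
    (hex : ∀ y : Y, ∃ φy : R →ₗ[R] Q, ∀ (r : R) (hr : r ∈ ExtensionOfMaxAdjoin.ideal i f y),
      φy r = ExtensionOfMaxAdjoin.idealTo i f y ⟨r, hr⟩) :
    (extensionOfMax i f).domain = ⊤ := by
  choose φ hφ using hex
  refine Submodule.eq_top_iff'.mpr fun y => ?_
  rw [← extensionOfMax_is_max i f (myExtensionOfMaxAdjoin i f φ hφ y)
    (myExtensionOfMax_le i f φ hφ)]
  show y ∈ supExtensionOfMaxSingleton i f y
  exact Submodule.mem_sup.mpr
    ⟨0, Submodule.zero_mem _, y, Submodule.mem_span_singleton_self _, zero_add _⟩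

/-- Weak Baer criterion: if `Q` embeds in an injective module `Et`
and every ideal map into `Q` which is realized by multiplication by an element of `Et`
is realized by multiplication by an element of `Q`, then `Q` is injective. -/
private theorem injective_of_weak_baer {Et : Type v} [AddCommGroup Et] [Module R Et]
    (hE : Module.Injective R Et) (ε : Q →ₗ[R] Et)
    (hw : ∀ (I : Ideal R) (g : I →ₗ[R] Q) (c : Et),
      (∀ (r : R) (hr : r ∈ I), ε (g ⟨r, hr⟩) = r • c) →
      ∃ d : Q, ∀ (r : R) (hr : r ∈ I), g ⟨r, hr⟩ = r • d) :
    Module.Injective R Q where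
  out X Y _ _ _ _ i hi f := by
    haveI : Fact (Function.Injective i) := ⟨hi⟩
    have hex : ∀ y : Y, ∃ φy : R →ₗ[R] Q,
        ∀ (r : R) (hr : r ∈ ExtensionOfMaxAdjoin.ideal i f y),
          φy r = ExtensionOfMaxAdjoin.idealTo i f y ⟨r, hr⟩ := by
      intro y
      obtain ⟨G, hG⟩ := hE.out ((extensionOfMax i f).domain.subtype)
        (Submodule.injective_subtype _) (ε.comp (extensionOfMax i f).toLinearPMap.toFun)
      obtain ⟨d, hd⟩ := hw (ExtensionOfMaxAdjoin.ideal i f y)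
        (ExtensionOfMaxAdjoin.idealTo i f y) (G y) (fun r hr => by
          have h1 : ExtensionOfMaxAdjoin.idealTo i f y ⟨r, hr⟩
              = (extensionOfMax i f).toLinearPMap ⟨r • y, hr⟩ := rfl
          have h2 := hG ⟨r • y, hr⟩
          simp only [Submodule.coe_subtype, LinearMap.coe_comp, Function.comp_apply] at h2
          have h3 : ε ((extensionOfMax i f).toLinearPMap ⟨r • y, hr⟩) = G (r • y) := h2.symm
          rw [h1, h3, map_smul])
      exact ⟨LinearMap.toSpanSingleton R Q d, fun r hr => by
        rw [LinearMap.toSpanSingleton_apply]; exact (hd r hr).symm⟩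
    have htop := my_eq_top i f hex
    refine ⟨{ toFun := fun y => (extensionOfMax i f).toLinearPMap ⟨y, htop.symm ▸ ⟨⟩⟩
              map_add' := fun x y => by rw [← LinearPMap.map_add]; congr
              map_smul' := fun r x => by rw [← LinearPMap.map_smul]; dsimp },
      fun x => ((extensionOfMax i f).is_extension x).symm⟩

end Aux3

/-! ### Given definitions -/

/-- A module `M` is finitely injective if every finite subset of `M` is contained in an
injective submodule of `M`. -/
def FinitelyInjective (R : Type*) [Ring R] (M : Type*) [AddCommGroup M] [Module R M] : Prop :=
  ∀ s : Finset M, ∃ N : Submodule R M, Module.Injective R N ∧ ∀ x ∈ s, x ∈ N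

/-- An injective module `M` is `Σ`-injective if every direct sum of copies of `M`
is injective. -/
def SigmaInjective (R : Type u) [Ring R] (M : Type v) [AddCommGroup M] [Module R M] : Prop :=
  ∀ ι : Type v, Module.Injective R (⨁ _ : ι, M)

/-- A module is a direct sum of injective modules if it is the internal direct sum of a
family of injective submodules. -/
def IsDirectSumOfInjectives (R : Type u) [Ring R] (M : Type v) [AddCommGroup M]
    [Module R M] : Prop :=
  ∃ (ι : Type v) (_ : DecidableEq ι) (p : ι → Submodule R M),
    (∀ i, Module.Injective R (p i)) ∧ DirectSum.IsInternal p

theorem sigmaInjective_iff_finitelyInjective_submodules_injective (R : Type u) [Ring R]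
    (M : Type v) [AddCommGroup M] [Module R M] (hMinj : Module.Injective R M)
    -- `E` is an injective hull of `M^(ℵ₀)`:
    (E : Type v) [AddCommGroup E] [Module R E] (hEinj : Module.Injective R E)
    (j : (⨁ _ : ℕ, M) →ₗ[R] E) (hj : Function.Injective j)
    (hess : ∀ P : Submodule R E, Disjoint P (LinearMap.range j) → P = ⊥) :
    SigmaInjective R M ↔
      ∀ N : Submodule R E, FinitelyInjective R N → Module.Injective R N := by
  classical
  constructor
  · -- Forward direction
    intro hSigma N hfinN
    -- `ℕ →₀ M` and `⨁ _ : ℕ, M` are injective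
    have hM' : Module.Injective R (ℕ →₀ M) :=
      inj_of_equiv ((finsuppLEquivDirectSum R M (ULift.{v} ℕ)).symm.trans
        (Finsupp.domLCongr Equiv.ulift)) (hSigma (ULift.{v} ℕ))
    have hDS : Module.Injective R (⨁ _ : ℕ, M) :=
      inj_of_equiv (finsuppLEquivDirectSum R M ℕ) hM'
    -- `E` is isomorphic to `⨁ _ : ℕ, M` since the image of `j` is an injective essential
    -- submodule
    obtain ⟨gE, hgE⟩ := hDS.out j hj LinearMap.id
    have hker : LinearMap.ker gE = ⊥ := by
      apply hess
      rw [Submodule.disjoint_def]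
      rintro x hx1 ⟨z, rfl⟩
      have h1 : gE (j z) = z := hgE z
      rw [LinearMap.mem_ker] at hx1
      rw [hx1] at h1
      rw [← h1, map_zero]
    have hbij : Function.Bijective gE :=
      ⟨LinearMap.ker_eq_bot.mp hker, fun z => ⟨j z, hgE z⟩⟩
    have eqE2 : E ≃ₗ[R] (ℕ →₀ M) :=
      (LinearEquiv.ofBijective gE hbij).trans (finsuppLEquivDirectSum R M ℕ).symm
    -- `ℕ →₀ E` is injective
    have hNE : Module.Injective R (ℕ →₀ E) :=
      inj_of_equiv
        ((finsuppLEquivDirectSum R M (ULift.{v} (ℕ × ℕ))).symm.trans <|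
          (Finsupp.domLCongr (Equiv.ulift : ULift.{v} (ℕ × ℕ) ≃ ℕ × ℕ)).trans <|
          (Finsupp.finsuppProdLEquiv R).trans <|
          Finsupp.mapRange.linearEquiv eqE2.symm)
        (hSigma (ULift.{v} (ℕ × ℕ)))
    -- now apply the weak Baer criterion
    refine injective_of_weak_baer hEinj N.subtype ?_
    intro I g c hgc
    obtain ⟨x0, hx0T, hmax⟩ := exists_max_torsion hNE {x : E | ∃ d ∈ N, x = c - d}
      ⟨c - 0, 0, N.zero_mem, rfl⟩
    obtain ⟨dstar, hdstarN, rfl⟩ := hx0T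
    have hI : ∀ r : R, r ∈ I → r • (c - dstar) = 0 := by
      by_contra hcon
      push_neg at hcon
      obtain ⟨a, haI, hane⟩ := hcon
      set w : E := a • (c - dstar) with hw_def
      have hwN : w ∈ N := by
        have h1 : (↑(g ⟨a, haI⟩) : E) = a • c := hgc a haI
        have h2 : w = (↑(g ⟨a, haI⟩) : E) - a • dstar := by rw [hw_def, smul_sub, h1]
        rw [h2]
        exact Submodule.sub_mem N (g ⟨a, haI⟩).2 (Submodule.smul_mem N a hdstarN)
      obtain ⟨N₀, hN₀inj, hN₀mem⟩ := hfinN {⟨w, hwN⟩}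
      have hw₀ : (⟨w, hwN⟩ : N) ∈ N₀ := hN₀mem _ (Finset.mem_singleton_self _)
      set w₀ : N₀ := ⟨⟨w, hwN⟩, hw₀⟩ with hw₀def
      set ι₀ : N₀ →ₗ[R] E := N.subtype.comp N₀.subtype with hι₀def
      have hι₀inj : Function.Injective ι₀ := fun p q h =>
        Subtype.ext (Subtype.ext (by exact h))
      set C : Submodule R E := Submodule.span R {c - dstar} with hCdef
      set W' : Submodule R N₀ := Submodule.span R {w₀} with hW'def
      have hκmem : ∀ x : W', ι₀ ↑x ∈ C := by
        rintro ⟨x, hx⟩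
        rw [hW'def, Submodule.mem_span_singleton] at hx
        obtain ⟨r, rfl⟩ := hx
        show ι₀ (r • w₀) ∈ C
        rw [map_smul]
        have h1 : (ι₀ w₀ : E) = w := rfl
        rw [h1, hw_def, smul_smul]
        exact Submodule.smul_mem _ _ (Submodule.mem_span_singleton_self _)
      set κ : W' →ₗ[R] C := LinearMap.codRestrict C (ι₀.comp W'.subtype) (fun x => hκmem x)
        with hκdef
      have hκinj : Function.Injective κ := by
        intro p q h
        have h1 := congrArg Subtype.val h
        exact Subtype.ext (hι₀inj h1)
      obtain ⟨ψ, hψ⟩ := hN₀inj.out (X := W') (Y := C) κ hκinj W'.subtype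
      set e : E := ι₀ (ψ ⟨c - dstar, Submodule.mem_span_singleton_self _⟩) with he_def
      have heN : e ∈ N := ((ψ ⟨c - dstar, Submodule.mem_span_singleton_self _⟩ : N₀) : N).2
      have hsmul_e : ∀ s : R, s • e = ι₀ (ψ ⟨s • (c - dstar),
          Submodule.smul_mem C s (Submodule.mem_span_singleton_self _)⟩) := by
        intro s
        rw [he_def, ← map_smul, ← map_smul]
        rfl
      have hTor1 : ∀ s ∈ Ideal.torsionOf R E (c - dstar),
          s • (c - (dstar + e)) = 0 := by
        intro s hs
        rw [Ideal.mem_torsionOf_iff] at hs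
        have h1 : s • e = 0 := by
          have h2 : (⟨s • (c - dstar),
              Submodule.smul_mem C s (Submodule.mem_span_singleton_self _)⟩ : C) = 0 := by
            apply Subtype.ext
            show s • (c - dstar) = ((0 : C) : E)
            rw [hs]
            rfl
          have h3 : ι₀ (ψ ⟨s • (c - dstar),
              Submodule.smul_mem C s (Submodule.mem_span_singleton_self _)⟩)
              = ι₀ (ψ 0) := congrArg (fun t : C => ι₀ (ψ t)) h2
          simp only [map_zero] at h3
          rw [hsmul_e s]
          exact h3
        rw [sub_add_eq_sub_sub, smul_sub, hs, h1, sub_zero]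
      have hTor2 : a • (c - (dstar + e)) = 0 := by
        have h1 : a • e = w := by
          have h2 : (⟨a • (c - dstar),
              Submodule.smul_mem C a (Submodule.mem_span_singleton_self _)⟩ : C)
              = κ ⟨w₀, Submodule.mem_span_singleton_self _⟩ := Subtype.ext rfl
          have h3 : ι₀ (ψ ⟨a • (c - dstar),
              Submodule.smul_mem C a (Submodule.mem_span_singleton_self _)⟩)
              = ι₀ (ψ (κ ⟨w₀, Submodule.mem_span_singleton_self _⟩)) :=
            congrArg (fun t : C => ι₀ (ψ t)) h2
          rw [hsmul_e a, h3, hψ ⟨w₀, Submodule.mem_span_singleton_self _⟩]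
          rfl
        rw [sub_add_eq_sub_sub, smul_sub, h1, ← hw_def, sub_self]
      have hlt : Ideal.torsionOf R E (c - dstar) < Ideal.torsionOf R E (c - (dstar + e)) := by
        refine lt_of_le_of_ne (fun s hs => (Ideal.mem_torsionOf_iff _ _).mpr (hTor1 s hs))
          (fun heq => ?_)
        have h1 : a ∈ Ideal.torsionOf R E (c - (dstar + e)) :=
          (Ideal.mem_torsionOf_iff _ _).mpr hTor2
        rw [← heq] at h1
        exact hane ((Ideal.mem_torsionOf_iff _ _).mp h1)
      exact hmax (c - (dstar + e)) ⟨dstar + e, Submodule.add_mem N hdstarN heN, rfl⟩ hlt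
    refine ⟨⟨dstar, hdstarN⟩, fun r hr => ?_⟩
    apply Subtype.ext
    have h1 : (↑(g ⟨r, hr⟩) : E) = r • c := hgc r hr
    have h2 := hI r hr
    rw [smul_sub, sub_eq_zero] at h2
    show (↑(g ⟨r, hr⟩) : E) = r • dstar
    rw [h1, h2]
  · -- Reverse direction
    intro H ι
    have hMpi : ∀ κ : Type v, Module.Injective R (κ → M) := fun κ =>
      inj_pi (fun _ => hMinj)
    -- the image of `j` is a finitely injective submodule of `E`
    have hfinRange : FinitelyInjective R (LinearMap.range j) := by
      intro s
      let y : (LinearMap.range j) → (⨁ _ : ℕ, M) := fun x => x.2.choose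
      have hy : ∀ x, j (y x) = ↑x := fun x => x.2.choose_spec
      let F : Finset ℕ := s.sup fun x => DFinsupp.support (y x)
      let ρ' : ((ULift.{v} F) → M) →ₗ[R] (ℕ →₀ M) :=
        { toFun := fun x => Finsupp.ofSupportFinite
            (fun n => if h : n ∈ F then x ⟨⟨n, h⟩⟩ else 0)
            (Set.Finite.subset F.finite_toSet (fun n hn => by
              simp only [Function.mem_support] at hn
              by_contra hc
              exact hn (dif_neg hc)))
          map_add' := fun x x' => Finsupp.ext fun n => by
            simp only [Finsupp.ofSupportFinite_coe, Finsupp.add_apply, Pi.add_apply]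
            split_ifs <;> simp
          map_smul' := fun r x => Finsupp.ext fun n => by
            simp only [Finsupp.ofSupportFinite_coe, Finsupp.smul_apply, Pi.smul_apply,
              RingHom.id_apply]
            split_ifs <;> simp }
      have hρ'inj : Function.Injective ρ' := by
        intro x x' h
        funext k
        have h1 := congrArg (fun t : ℕ →₀ M => t ↑k.down) h
        simpa only [ρ', LinearMap.coe_mk, AddHom.coe_mk, Finsupp.ofSupportFinite_coe,
          dif_pos k.down.2] using h1
      let eqvDS := finsuppLEquivDirectSum R M ℕ
      let ρ : ((ULift.{v} F) → M) →ₗ[R] (⨁ _ : ℕ, M) := eqvDS.toLinearMap.comp ρ'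
      let ψ' : ((ULift.{v} F) → M) →ₗ[R] (LinearMap.range j) :=
        LinearMap.codRestrict (LinearMap.range j) (j.comp ρ)
          (fun x => LinearMap.mem_range_self _ _)
      have hψ'inj : Function.Injective ψ' := by
        intro p q h
        have h1 : j (ρ p) = j (ρ q) := congrArg Subtype.val h
        exact hρ'inj (eqvDS.injective (hj h1))
      refine ⟨LinearMap.range ψ', inj_of_equiv (LinearEquiv.ofInjective ψ' hψ'inj)
        (hMpi _), ?_⟩
      intro x hx
      refine ⟨fun k => y x ↑k.down, ?_⟩
      apply Subtype.ext
      show j (ρ fun k => y x ↑k.down) = ↑x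
      rw [← hy x]
      congr 1
      show eqvDS (ρ' fun k => y x ↑k.down) = y x
      refine DFinsupp.ext fun n => ?_
      have h1 : (eqvDS (ρ' fun k => y x ↑k.down)) n = (ρ' fun k => y x ↑k.down) n := rfl
      rw [h1]
      show (if h : n ∈ F then y x n else 0) = y x n
      by_cases h : n ∈ F
      · rw [dif_pos h]
      · rw [dif_neg h]
        symm
        by_contra hne
        refine h ?_
        have hsupp : DFinsupp.support (y x) ⊆ F :=
          Finset.le_sup (f := fun x => DFinsupp.support (y x)) hx
        exact hsupp (DFinsupp.mem_support_iff.mpr hne)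
    -- hence `⨁ _ : ℕ, M` and `ℕ →₀ M` are injective
    have hDSinj : Module.Injective R (⨁ _ : ℕ, M) :=
      inj_of_equiv (LinearEquiv.ofInjective j hj).symm (H _ hfinRange)
    have hFinsuppM : Module.Injective R (ℕ →₀ M) :=
      inj_of_equiv (finsuppLEquivDirectSum R M ℕ).symm hDSinj
    -- Faith's argument: `ι →₀ M` is injective
    have hIota : Module.Injective R (ι →₀ M) := by
      refine injective_of_weak_baer (hMpi ι) Finsupp.lcoeFun ?_
      intro I g c hgc
      set B : Set ι := {i | ∃ p : I, (g p) i ≠ 0} with hBdef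
      have hBfin : B.Finite := by
        by_contra hBinf
        have hBinf' : B.Infinite := hBinf
        let emb := hBinf'.natEmbedding
        set cc : ℕ → M := fun n => c ↑(emb n) with hcc
        obtain ⟨w, hw⟩ := key_ext hFinsuppM cc
        obtain ⟨n, hn⟩ : ∃ n, n ∉ w.support := Finset.exists_notMem w.support
        have hwn : w n = 0 := Finsupp.notMem_support_iff.mp hn
        obtain ⟨p, hp⟩ : ∃ p : I, (g p) ↑(emb n) ≠ 0 := (emb n).2
        apply hp
        have h1 : ∀ m : ℕ, (↑p : R) • cc m = (g p) ↑(emb m) := by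
          intro m
          have h2 := congrFun (hgc ↑p p.2) ↑(emb m)
          simp only [Finsupp.lcoeFun_apply, Pi.smul_apply] at h2
          rw [hcc]
          exact h2.symm
        have hfin : (Function.support ((↑p : R) • cc)).Finite := by
          have h3 : Function.support ((↑p : R) • cc) ⊆
              (fun m : ℕ => (↑(emb m) : ι)) ⁻¹' (Function.support (g p)) := by
            intro m hm
            simp only [Function.mem_support, Pi.smul_apply] at hm
            simp only [Set.mem_preimage, Function.mem_support]
            rw [← h1 m]
            exact hm
          refine Set.Finite.subset (Set.Finite.preimage ?_ (Finsupp.finite_support (g p))) h3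
          exact Function.Injective.injOn (fun m m' hmm =>
            emb.injective (Subtype.ext hmm))
        have h4 := hw ↑p hfin n
        rw [← h1 n]
        have h5 : (↑p : R) • cc n = (↑p : R) • w n := h4
        rw [h5, hwn, smul_zero]
      refine ⟨Finsupp.ofSupportFinite (fun i => if i ∈ B then c i else 0)
        (Set.Finite.subset hBfin fun i hi => by
          simp only [Function.mem_support] at hi
          by_contra hc
          exact hi (if_neg hc)), fun r hr => ?_⟩
      apply Finsupp.ext
      intro i
      have hgi : (g ⟨r, hr⟩) i = r • c i := by
        have h2 := congrFun (hgc r hr) i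
        simpa only [Finsupp.lcoeFun_apply, Pi.smul_apply] using h2
      rw [Finsupp.smul_apply]
      rw [show (Finsupp.ofSupportFinite (fun i => if i ∈ B then c i else 0) _ : ι →₀ M) i
        = if i ∈ B then c i else 0 from rfl]
      by_cases hi : i ∈ B
      · rw [if_pos hi]
        exact hgi
      · rw [if_neg hi, smul_zero]
        by_contra hne
        exact hi ⟨⟨r, hr⟩, hne⟩
    exact inj_of_equiv (finsuppLEquivDirectSum R M ι) hIota
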